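/- The mapping T : [0,1] → [0,1] defined by T(x) = √x for x ≠ 0 and T(0) = 1 satisfies: for all x, y ∈ [0,1], limsup_{n→∞} |Tⁿx − Tⁿy| ≤ |x − y|; yet there is no sequence (k_n) of reals with k_n → 1 and |Tⁿx − Tⁿy| ≤ k_n|x − y| for all x, y ∈ [0,1] and n. -/

import Mathlib

open Filter

theorem stmt10 (T : ℝ → ℝ)
    (hT : ∀ x, T x = if x = 0 then 1 else Real.sqrt x) :
    (∀ x ∈ Set.Icc (0 : ℝ) 1, ∀ y ∈ Set.Icc (0 : ℝ) 1,
      Filter.limsup (fun n => |T^[n] x - T^[n] y|) Filter.atTop ≤ |x - y|) ∧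
    ¬ ∃ k : ℕ → ℝ, Filter.Tendsto k Filter.atTop (nhds 1) ∧
      ∀ n : ℕ, ∀ x ∈ Set.Icc (0 : ℝ) 1, ∀ y ∈ Set.Icc (0 : ℝ) 1,
        |T^[n] x - T^[n] y| ≤ k n * |x - y| := by
  -- iterate formula for positive x
  have hiter : ∀ x : ℝ, 0 < x → ∀ n : ℕ, T^[n] x = x ^ ((1/2 : ℝ) ^ n) := by
    intro x hx n
    induction n with
    | zero => simp
    | succ n ih =>
      have hpos : (0:ℝ) < x ^ ((1/2 : ℝ) ^ n) := Real.rpow_pos_of_pos hx _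
      rw [Function.iterate_succ_apply', ih, hT, if_neg hpos.ne',
        Real.sqrt_eq_rpow, ← Real.rpow_natCast, ← Real.rpow_mul hx.le] at *
      rw [Real.rpow_natCast, pow_succ]
  -- tendsto to 1
  have hlim : ∀ x ∈ Set.Icc (0:ℝ) 1, Tendsto (fun n => T^[n] x) atTop (nhds 1) := by
    intro x hx
    rcases eq_or_lt_of_le hx.1 with h0 | h0
    · have hone : ∀ m : ℕ, T^[m] (1:ℝ) = 1 := by
        intro m
        induction m with
        | zero => simp
        | succ m ih =>
          rw [Function.iterate_succ_apply', ih, hT]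
          norm_num
      have : ∀ n ≥ 1, T^[n] x = 1 := by
        intro n hn
        obtain ⟨m, rfl⟩ := Nat.exists_eq_add_of_le hn
        rw [add_comm, Function.iterate_add_apply]
        have h1 : T^[1] x = 1 := by simp [hT, ← h0]
        rw [h1, hone]
      refine Tendsto.congr' ?_ tendsto_const_nhds
      filter_upwards [eventually_ge_atTop 1] with n hn using (this n hn).symm
    · have h1 : Tendsto (fun n : ℕ => (1/2 : ℝ) ^ n) atTop (nhds 0) := by
        apply tendsto_pow_atTop_nhds_zero_of_lt_one <;> norm_num
      have h2 : ContinuousAt (fun t : ℝ => x ^ t) 0 :=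
        Real.continuousAt_const_rpow h0.ne'
      have := h2.tendsto.comp h1
      rw [Real.rpow_zero] at this
      refine Tendsto.congr ?_ this
      intro n
      exact (hiter x h0 n).symm
  constructor
  · intro x hx y hy
    have hx1 := hlim x hx
    have hy1 := hlim y hy
    have : Tendsto (fun n => |T^[n] x - T^[n] y|) atTop (nhds 0) := by
      have := (hx1.sub hy1).abs
      simpa using this
    rw [this.limsup_eq]
    exact abs_nonneg _
  · rintro ⟨k, -, hk⟩
    set c := |k 1| + 1 with hc
    have hc0 : (0:ℝ) < c := by positivity
    set x := min (1/4 : ℝ) (1/(4*c)) with hxdef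
    have hx0 : 0 < x := by
      apply lt_min <;> positivity
    have hx14 : x ≤ 1/4 := min_le_left _ _
    have hx1 : x ∈ Set.Icc (0:ℝ) 1 := ⟨hx0.le, by linarith⟩
    have h01 : (0:ℝ) ∈ Set.Icc (0:ℝ) 1 := ⟨le_refl _, zero_le_one⟩
    have hspec := hk 1 x hx1 0 h01
    have hT0 : T^[1] (0:ℝ) = 1 := by simp [hT]
    have hTx : T^[1] x = Real.sqrt x := by simp [hT, hx0.ne']
    rw [hT0, hTx] at hspec
    have hs : Real.sqrt x ≤ 1/2 := by
      have : Real.sqrt x ≤ Real.sqrt (1/4) := Real.sqrt_le_sqrt hx14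
      rwa [show (1/4 : ℝ) = (1/2)^2 by norm_num, Real.sqrt_sq (by norm_num)] at this
    have habs : (1/2 : ℝ) ≤ |Real.sqrt x - 1| := by
      rw [abs_sub_comm, abs_of_nonneg (by nlinarith [Real.sqrt_nonneg x])]
      linarith
    have hrhs : k 1 * |x - 0| ≤ 1/4 := by
      rw [sub_zero, abs_of_pos hx0]
      have h1 : k 1 ≤ c := by
        have := le_abs_self (k 1); linarith
      have h2 : x ≤ 1/(4*c) := min_le_right _ _
      calc k 1 * x ≤ c * x := by nlinarith
        _ ≤ c * (1/(4*c)) := by nlinarith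
        _ = 1/4 := by field_simp
    linarith
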